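/- Let r ≥ 1 be an integer and let γ_0, …, γ_r be positive characters with sup γ_i < s_0(γ_{i-1}) for all 1 ≤ i ≤ r, and set γ = γ_0 + γ_1[-1] + ⋯ + γ_r[-r]. Then: (a) γ(n) ≥ -(r+1) for all n with r+1 ≤ n < s_0(γ_{r-1}) + r - 1; (b) for each 1 ≤ i ≤ r-1 and each n with s_0(γ_i) + i ≤ n < s_0(γ_{i-1}) + i - 1, one has γ(n) ≥ -i; (c) γ(n) ≥ 0 for all n ≥ s_0(γ_0). -/

import Mathlib

open scoped BigOperators

/-- The largest `m` with `C(m, i) ≤ α` (for `i ≥ 1`, `α ≥ 1` this is the leading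
exponent of the `i`-binomial development of `α`). -/
noncomputable def lead (α i : ℕ) : ℕ := sSup {m : ℕ | Nat.choose m i ≤ α}

/-- `binUp i α = α^{<i>}`, defined through the `i`-binomial development of `α`:
if `α = C(m_i, i) + C(m_{i-1}, i-1) + ⋯ + C(m_j, j)` with
`m_i > m_{i-1} > ⋯ > m_j ≥ j ≥ 1`, then
`binUp i α = C(m_i+1, i+1) + C(m_{i-1}+1, i) + ⋯ + C(m_j+1, j+1)`, and `binUp i 0 = 0`. -/
noncomputable def binUp : ℕ → ℕ → ℕ
  | 0, _ => 0
  | (i+1), α =>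
    if α = 0 then 0
    else Nat.choose (lead α (i+1) + 1) (i+2) +
      binUp i (α - Nat.choose (lead α (i+1)) (i+1))

/-- `h : ℕ → ℕ` is a Macaulay function if `h 0 = 1` and `h (i+1) ≤ (h i)^{<i>}`
for every `i ≥ 1`. -/
def MacaulayFun (h : ℕ → ℕ) : Prop :=
  h 0 = 1 ∧ ∀ i, 1 ≤ i → h (i+1) ≤ binUp i (h i)

/-- `s₀(h) = inf {n | h n < C(a+n-1, n)} ∈ ℕ ∪ {∞}` for a Macaulay function of
type `a = h 1`. -/
noncomputable def s0M (h : ℕ → ℕ) : ℕ∞ :=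
  sInf {x : ℕ∞ | ∃ n : ℕ, x = (n : ℕ∞) ∧ h n < Nat.choose (h 1 + n - 1) n}

/-- `sup f = max {n | f n ≠ 0}` for a finitely supported `f : ℕ → ℕ`. -/
noncomputable def supN (f : ℕ → ℕ) : ℕ := sSup {n : ℕ | f n ≠ 0}

/-- A character: a finitely supported `γ : ℤ → ℤ` with `∑ γ(n) = 0`. -/
def IsChar (γ : ℤ → ℤ) : Prop :=
  (Function.support γ).Finite ∧ ∑ᶠ n, γ n = 0

/-- `s₀(γ) = inf {n ≥ 0 | γ n ≠ -1}`. -/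
noncomputable def s0C (γ : ℤ → ℤ) : ℤ := sInf {n : ℤ | 0 ≤ n ∧ γ n ≠ -1}

/-- A positive character: `γ(n) = 0` for `n < 0`, `γ(0) = -1` and `γ(n) ≥ 0`
for every `n ≥ s₀(γ)`. -/
def PosChar (γ : ℤ → ℤ) : Prop :=
  IsChar γ ∧ (∀ n < 0, γ n = 0) ∧ γ 0 = -1 ∧ ∀ n : ℤ, s0C γ ≤ n → 0 ≤ γ n

/-- `sup γ = max {n | γ n ≠ 0}` for a finitely supported `γ : ℤ → ℤ`. -/
noncomputable def supZ (γ : ℤ → ℤ) : ℤ := sSup {n : ℤ | γ n ≠ 0}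

/-- `IsDev α i j m` says that `α = C(m_i, i) + C(m_{i-1}, i-1) + ⋯ + C(m_j, j)`
with `m_i > m_{i-1} > ⋯ > m_j ≥ j ≥ 1` is the `i`-binomial development of `α`. -/
def IsDev (α i j : ℕ) (m : ℕ → ℕ) : Prop :=
  1 ≤ j ∧ j ≤ i ∧ j ≤ m j ∧ (∀ k, j ≤ k → k < i → m k < m (k+1)) ∧
    α = ∑ k ∈ Finset.Icc j i, Nat.choose (m k) k
section lems
variable {γ : ℤ → ℤ}

lemma s0C_set_nonempty (h : PosChar γ) : {n : ℤ | 0 ≤ n ∧ γ n ≠ -1}.Nonempty := by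
  obtain ⟨B, hB⟩ := h.1.1.bddAbove
  refine ⟨max B 0 + 1, by positivity, ?_⟩
  intro hc
  have : max B 0 + 1 ∈ Function.support γ := by simp [Function.support, hc]
  have := hB this
  have : max B 0 + 1 ≤ max B 0 := le_trans this (le_max_left _ _)
  omega

lemma s0C_bddBelow : BddBelow {n : ℤ | 0 ≤ n ∧ γ n ≠ -1} := ⟨0, fun _ hx => hx.1⟩

lemma s0C_nonneg (h : PosChar γ) : 0 ≤ s0C γ :=
  (Int.csInf_mem (s0C_set_nonempty h) s0C_bddBelow).1

lemma eq_neg_one_of_lt_s0C {m : ℤ} (hm : 0 ≤ m) (hlt : m < s0C γ) : γ m = -1 := by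
  by_contra hc
  exact absurd (csInf_le s0C_bddBelow ⟨hm, hc⟩) (not_le.mpr hlt)

lemma neg_one_le_posChar (h : PosChar γ) (m : ℤ) : -1 ≤ γ m := by
  rcases lt_or_ge m 0 with hm | hm
  · rw [h.2.1 m hm]; norm_num
  rcases lt_or_ge m (s0C γ) with hlt | hge
  · rw [eq_neg_one_of_lt_s0C hm hlt]
  · linarith [h.2.2.2 m hge]

lemma supZ_bddAbove (h : PosChar γ) : BddAbove {n : ℤ | γ n ≠ 0} := h.1.1.bddAbove

lemma le_supZ (h : PosChar γ) {m : ℤ} (hm : γ m ≠ 0) : m ≤ supZ γ := le_csSup (supZ_bddAbove h) hm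

lemma supZ_nonneg (h : PosChar γ) : 0 ≤ supZ γ := le_supZ h (by rw [h.2.2.1]; norm_num)

lemma s0C_le_supZ (h : PosChar γ) : s0C γ ≤ supZ γ := by
  by_contra hc
  push_neg at hc
  have hN : 0 ≤ supZ γ := supZ_nonneg h
  have hval : ∀ m ∈ Finset.Icc (0:ℤ) (supZ γ), γ m = -1 := fun m hm => by
    rw [Finset.mem_Icc] at hm
    exact eq_neg_one_of_lt_s0C hm.1 (lt_of_le_of_lt hm.2 hc)
  have hsub : Function.support γ ⊆ (Finset.Icc (0:ℤ) (supZ γ) : Finset ℤ) := by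
    intro m hm
    simp only [Finset.coe_Icc, Set.mem_Icc]
    refine ⟨?_, le_supZ h hm⟩
    by_contra hneg
    exact hm (h.2.1 m (by omega))
  have hsum : ∑ᶠ n, γ n = ∑ m ∈ Finset.Icc (0:ℤ) (supZ γ), γ m :=
    finsum_eq_sum_of_support_subset γ hsub
  rw [h.1.2, Finset.sum_congr rfl hval, Finset.sum_const, Int.card_Icc] at hsum
  have ht : ((supZ γ + 1 - 0).toNat : ℤ) = supZ γ + 1 := by omega
  rw [nsmul_eq_mul, ht] at hsum
  omega
end lems

section mainlems
variable {r : ℕ} {Γ : ℕ → ℤ → ℤ}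

lemma s0C_chain (hpos : ∀ i ≤ r, PosChar (Γ i))
    (hgap : ∀ i, 1 ≤ i → i ≤ r → supZ (Γ i) < s0C (Γ (i - 1))) :
    ∀ j ≤ r, ∀ i ≤ j, s0C (Γ j) + (j : ℤ) ≤ s0C (Γ i) + (i : ℤ) := by
  have step : ∀ k, k < r → s0C (Γ (k+1)) + 1 ≤ s0C (Γ k) := by
    intro k hk
    have h1 := s0C_le_supZ (hpos (k+1) (by omega))
    have h2 := hgap (k+1) (by omega) (by omega)
    simp only [Nat.add_sub_cancel] at h2
    omega
  have key : ∀ d i, i + d ≤ r → s0C (Γ (i + d)) + (d : ℤ) ≤ s0C (Γ i) := by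
    intro d
    induction d with
    | zero => intro i _; simp
    | succ e ih =>
      intro i hie
      have h1 := ih (i+1) (by omega)
      have h2 := step i (by omega)
      have : i + 1 + e = i + (e + 1) := by omega
      rw [this] at h1
      push_cast at h1 ⊢
      omega
  intro j hj i hij
  have := key (j - i) i (by omega)
  have hji : i + (j - i) = j := by omega
  rw [hji] at this
  have : ((j - i : ℕ) : ℤ) = (j : ℤ) - (i : ℤ) := by push_cast; omega
  omega

lemma main_bound (hpos : ∀ i ≤ r, PosChar (Γ i))
    (hgap : ∀ i, 1 ≤ i → i ≤ r → supZ (Γ i) < s0C (Γ (i - 1)))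
    {γ : ℤ → ℤ} (hγ : ∀ n : ℤ, γ n = ∑ i ∈ Finset.range (r + 1), Γ i (n - i))
    (i : ℕ) (hi : i ≤ r) (n : ℤ) (hn : s0C (Γ i) + (i : ℤ) ≤ n) :
    -(i : ℤ) ≤ γ n := by
  rw [hγ]
  have hbd : ∀ j ∈ Finset.range (r+1),
      (if j < i then (-1 : ℤ) else 0) ≤ Γ j (n - j) := by
    intro j hj
    rw [Finset.mem_range] at hj
    by_cases hji : j < i
    · simpa [hji] using neg_one_le_posChar (hpos j (by omega)) (n - j)
    · simp only [hji, if_false]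
      have hch := s0C_chain hpos hgap j (by omega) i (by omega)
      exact (hpos j (by omega)).2.2.2 _ (by omega)
  have hsum : ∑ j ∈ Finset.range (r+1), (if j < i then (-1 : ℤ) else 0) = -(i : ℤ) := by
    rw [← Finset.sum_subset (Finset.range_subset_range.mpr (by omega : i ≤ r+1))
      (fun x _ hx => by simp [Finset.mem_range.not.mp hx, Nat.not_lt.mpr])]
    rw [Finset.sum_congr rfl (fun x hx => if_pos (Finset.mem_range.mp hx)),
      Finset.sum_const, Finset.card_range, nsmul_eq_mul]
    ring
  calc -(i:ℤ) = _ := hsum.symm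
    _ ≤ _ := Finset.sum_le_sum hbd
end mainlems


/-- Prop. 3.6: lower bounds for
`γ = γ₀ + γ₁[-1] + ⋯ + γ_r[-r]` built from positive characters with
`sup γᵢ < s₀(γ_{i-1})`. -/
theorem decomposition_lower_bounds (r : ℕ) (hr : 1 ≤ r) (Γ : ℕ → ℤ → ℤ)
    (hpos : ∀ i ≤ r, PosChar (Γ i))
    (hgap : ∀ i, 1 ≤ i → i ≤ r → supZ (Γ i) < s0C (Γ (i - 1)))
    (γ : ℤ → ℤ) (hγ : ∀ n : ℤ, γ n = ∑ i ∈ Finset.range (r + 1), Γ i (n - i)) :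
    (∀ n : ℤ, (r : ℤ) + 1 ≤ n → n < s0C (Γ (r - 1)) + (r : ℤ) - 1 →
      -((r : ℤ) + 1) ≤ γ n) ∧
    (∀ i : ℕ, 1 ≤ i → i ≤ r - 1 → ∀ n : ℤ,
      s0C (Γ i) + (i : ℤ) ≤ n → n < s0C (Γ (i - 1)) + (i : ℤ) - 1 →
      -(i : ℤ) ≤ γ n) ∧
    (∀ n : ℤ, s0C (Γ 0) ≤ n → 0 ≤ γ n) := by
  refine ⟨?_, ?_, ?_⟩
  · intro n _ _
    rw [hγ]
    calc -((r:ℤ)+1) = ∑ _j ∈ Finset.range (r+1), (-1 : ℤ) := by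
          rw [Finset.sum_const, Finset.card_range, nsmul_eq_mul]; push_cast; ring
      _ ≤ _ := Finset.sum_le_sum fun j hj =>
          neg_one_le_posChar (hpos j (by have := Finset.mem_range.mp hj; omega)) _
  · intro i h1 h2 n hn _
    exact main_bound hpos hgap hγ i (by omega) n hn
  · intro n hn
    simpa using main_bound hpos hgap hγ 0 (by omega) n (by simpa using hn)
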